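/- Continuity of the stationary-distribution map: let K be a sub-Markovian kernel on finite E such that for every probability distribution α' on E, K_{α'} is irreducible and aperiodic with unique stationary distribution Γ(α'). Then the map α' ↦ Γ(α') is continuous on the probability simplex, and by Brouwer's fixed point theorem there exists α with α = Γ(α), which is then a quasi-stationary distribution of K. -/

import Mathlib

open Filter Topology

section
variable {E : Type*} [Fintype E] [Nonempty E]

lemma qsd_simplex_closed : IsClosed {p : E → ℝ | (∀ x, 0 ≤ p x) ∧ ∑ x, p x = 1} := by
  have h1 : IsClosed {p : E → ℝ | ∀ x, 0 ≤ p x} := by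
    have : {p : E → ℝ | ∀ x, 0 ≤ p x} = ⋂ x, {p : E → ℝ | 0 ≤ p x} := by
      ext p; simp [Set.mem_iInter]
    rw [this]
    exact isClosed_iInter fun x => isClosed_le continuous_const (continuous_apply x)
  exact h1.inter (isClosed_eq (by fun_prop) continuous_const)

lemma qsd_simplex_compact : IsCompact {p : E → ℝ | (∀ x, 0 ≤ p x) ∧ ∑ x, p x = 1} := by
  apply IsCompact.of_isClosed_subset
    (isCompact_univ_pi (fun _ : E => isCompact_Icc (a := (0:ℝ)) (b := 1)))
    qsd_simplex_closed
  rintro p ⟨h0, h1⟩ x _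
  exact ⟨h0 x, by
    calc p x ≤ ∑ y, p y := Finset.single_le_sum (fun y _ => h0 y) (Finset.mem_univ x)
    _ = 1 := h1⟩

lemma qsd_exists_pos {p : E → ℝ} (h0 : ∀ x, 0 ≤ p x) (h1 : ∑ x, p x = 1) :
    ∃ x, 0 < p x := by
  by_contra h
  push_neg at h
  have : ∑ x, p x ≤ 0 := Finset.sum_nonpos fun x _ => h x
  linarith

lemma qsd_pos_eig (M : E → E → ℝ) (hM : ∀ x y, 0 < M x y) :
    ∃ p : E → ℝ, (∀ x, 0 ≤ p x) ∧ ∑ x, p x = 1 ∧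
      ∀ y, ∑ x, p x * M x y = (∑ x, p x * ∑ y', M x y') * p y := by
  classical
  set B : ℝ := ∑ x, ∑ y, M x y with hB
  have hrow : ∀ x, ∑ y, M x y ≤ B := fun x =>
    Finset.single_le_sum (f := fun x => ∑ y, M x y)
      (fun x _ => Finset.sum_nonneg fun y _ => (hM x y).le) (Finset.mem_univ x)
  set T : Set (ℝ × (E → ℝ)) := {tp | (∀ x, 0 ≤ tp.2 x) ∧ ∑ x, tp.2 x = 1 ∧
    0 ≤ tp.1 ∧ tp.1 ≤ B ∧ ∀ y, tp.1 * tp.2 y ≤ ∑ x, tp.2 x * M x y} with hT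
  -- closedness
  have hTclosed : IsClosed T := by
    have c1 : IsClosed {tp : ℝ × (E → ℝ) | ∀ x, 0 ≤ tp.2 x} := by
      have : {tp : ℝ × (E → ℝ) | ∀ x, 0 ≤ tp.2 x} = ⋂ x, {tp : ℝ × (E → ℝ) | 0 ≤ tp.2 x} := by
        ext tp; simp [Set.mem_iInter]
      rw [this]
      exact isClosed_iInter fun x =>
        isClosed_le continuous_const ((continuous_apply x).comp continuous_snd)
    have c2 : IsClosed {tp : ℝ × (E → ℝ) | ∑ x, tp.2 x = 1} :=
      isClosed_eq (by fun_prop) continuous_const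
    have c3 : IsClosed {tp : ℝ × (E → ℝ) | 0 ≤ tp.1} :=
      isClosed_le continuous_const continuous_fst
    have c4 : IsClosed {tp : ℝ × (E → ℝ) | tp.1 ≤ B} :=
      isClosed_le continuous_fst continuous_const
    have c5 : IsClosed {tp : ℝ × (E → ℝ) | ∀ y, tp.1 * tp.2 y ≤ ∑ x, tp.2 x * M x y} := by
      have : {tp : ℝ × (E → ℝ) | ∀ y, tp.1 * tp.2 y ≤ ∑ x, tp.2 x * M x y}
          = ⋂ y, {tp : ℝ × (E → ℝ) | tp.1 * tp.2 y ≤ ∑ x, tp.2 x * M x y} := by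
        ext tp; simp [Set.mem_iInter]
      rw [this]
      exact isClosed_iInter fun y => isClosed_le (by fun_prop) (by fun_prop)
    exact c1.inter (c2.inter (c3.inter (c4.inter c5)))
  have hTcompact : IsCompact T := by
    apply IsCompact.of_isClosed_subset
      ((isCompact_Icc (a := (0:ℝ)) (b := B)).prod qsd_simplex_compact) hTclosed
    rintro ⟨t, p⟩ ⟨hp0, hp1, ht0, htB, _⟩
    exact ⟨⟨ht0, htB⟩, hp0, hp1⟩
  have hTne : T.Nonempty := by
    refine ⟨⟨0, fun _ => (Fintype.card E : ℝ)⁻¹⟩, fun x => by positivity, ?_, le_refl 0, ?_, ?_⟩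
    · simp [Finset.sum_const, Finset.card_univ]
    · exact Finset.sum_pos (fun x _ => Finset.sum_pos (fun y _ => hM x y) Finset.univ_nonempty)
        Finset.univ_nonempty |>.le
    · intro y
      simp only [zero_mul]
      exact Finset.sum_nonneg fun x _ => mul_nonneg (by positivity) (hM x y).le
  obtain ⟨⟨lam, p⟩, hmem, hmax⟩ := hTcompact.exists_isMaxOn hTne continuous_fst.continuousOn
  obtain ⟨hp0, hp1, hl0, hlB, hineq⟩ := hmem
  -- claim equality
  have heig : ∀ y, ∑ x, p x * M x y = lam * p y := by
    by_contra hne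
    push_neg at hne
    obtain ⟨y₀, hy₀⟩ := hne
    have hr : ∀ y, 0 ≤ ∑ x, p x * M x y - lam * p y := fun y => sub_nonneg.mpr (hineq y)
    have hry₀ : 0 < ∑ x, p x * M x y₀ - lam * p y₀ := (hr y₀).lt_of_ne (by
      intro h; exact hy₀ (by linarith [h.symm]))
    obtain ⟨x₀, hx₀⟩ := qsd_exists_pos hp0 hp1
    set s : E → ℝ := fun y => ∑ x, p x * M x y with hs
    have hspos : ∀ y, 0 < s y := by
      intro y
      have : p x₀ * M x₀ y ≤ s y :=
        Finset.single_le_sum (f := fun x => p x * M x y)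
          (fun x _ => mul_nonneg (hp0 x) (hM x y).le) (Finset.mem_univ x₀)
      nlinarith [hM x₀ y]
    set c : ℝ := ∑ y, s y with hc
    have hcpos : 0 < c := Finset.sum_pos (fun y _ => hspos y) Finset.univ_nonempty
    set q : E → ℝ := fun y => s y / c with hq
    have hq0 : ∀ y, 0 < q y := fun y => div_pos (hspos y) hcpos
    have hq1 : ∑ y, q y = 1 := by
      simp only [hq, ← Finset.sum_div]
      field_simp
      exact hc.symm
    -- strict inequality for q
    have hstrict : ∀ y, lam * q y < ∑ x, q x * M x y := by
      intro y
      have key : lam * s y < ∑ x, s x * M x y := by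
        have expand : ∑ x, s x * M x y
            = lam * s y + ∑ x, (∑ z, p z * M z x - lam * p x) * M x y := by
          have : ∀ x, s x * M x y = (∑ z, p z * M z x - lam * p x) * M x y + lam * (p x * M x y) := by
            intro x; simp only [hs]; ring
          rw [Finset.sum_congr rfl fun x _ => this x, Finset.sum_add_distrib, ← Finset.mul_sum]
          simp only [hs]; ring
        have hpos : 0 < ∑ x, (∑ z, p z * M z x - lam * p x) * M x y := by
          have h1 : (∑ z, p z * M z y₀ - lam * p y₀) * M y₀ y
              ≤ ∑ x, (∑ z, p z * M z x - lam * p x) * M x y :=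
            Finset.single_le_sum (f := fun x => (∑ z, p z * M z x - lam * p x) * M x y)
              (fun x _ => mul_nonneg (hr x) (hM x y).le) (Finset.mem_univ y₀)
          nlinarith [hM y₀ y]
        linarith
      have hq' : ∑ x, q x * M x y = (∑ x, s x * M x y) / c := by
        simp only [hq]
        rw [Finset.sum_div]
        exact Finset.sum_congr rfl fun x _ => div_mul_eq_mul_div _ _ _
      rw [hq', hq, lt_div_iff₀ hcpos]
      calc lam * (s y / c) * c = lam * s y := by field_simp
      _ < ∑ x, s x * M x y := key
    -- new candidate t'
    set t' : ℝ := Finset.univ.inf' Finset.univ_nonempty (fun y => (∑ x, q x * M x y) / q y) with ht'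
    have hlt : lam < t' := by
      rw [ht', Finset.lt_inf'_iff]
      intro y _
      rw [lt_div_iff₀ (hq0 y)]
      exact hstrict y
    have ht'le : ∀ y, t' * q y ≤ ∑ x, q x * M x y := by
      intro y
      have h1 : t' ≤ (∑ x, q x * M x y) / q y :=
        Finset.inf'_le _ (Finset.mem_univ y)
      calc t' * q y ≤ ((∑ x, q x * M x y) / q y) * q y :=
        mul_le_mul_of_nonneg_right h1 (hq0 y).le
      _ = ∑ x, q x * M x y := div_mul_cancel₀ _ (hq0 y).ne'
    have ht'B : t' ≤ B := by
      have : t' = ∑ y, t' * q y := by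
        rw [← Finset.mul_sum, hq1, mul_one]
      rw [this]
      calc ∑ y, t' * q y ≤ ∑ y, ∑ x, q x * M x y := Finset.sum_le_sum fun y _ => ht'le y
      _ = ∑ x, q x * ∑ y, M x y := by
          rw [Finset.sum_comm]
          exact Finset.sum_congr rfl fun x _ => by rw [Finset.mul_sum]
      _ ≤ ∑ x, q x * B := Finset.sum_le_sum fun x _ =>
          mul_le_mul_of_nonneg_left (hrow x) (hq0 x).le
      _ = B := by rw [← Finset.sum_mul, hq1, one_mul]
    have : t' ≤ lam := hmax (a := ⟨t', q⟩) ⟨fun y => (hq0 y).le, hq1, le_trans hl0 hlt.le, ht'B, ht'le⟩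
    linarith
  refine ⟨p, hp0, hp1, fun y => ?_⟩
  have hlam : lam = ∑ x, p x * ∑ y', M x y' := by
    have h1 : ∑ y, ∑ x, p x * M x y = ∑ y, lam * p y := Finset.sum_congr rfl fun y _ => heig y
    rw [← Finset.mul_sum, hp1, mul_one] at h1
    rw [← h1, Finset.sum_comm]
    exact Finset.sum_congr rfl fun x _ => by rw [Finset.mul_sum]
  rw [heig y, hlam]
end

set_option linter.unusedSectionVars false in
section
variable {E : Type*} [Fintype E] [Nonempty E]

lemma qsd_exists_eig (K : E → E → ℝ) (hK0 : ∀ x y, 0 ≤ K x y) :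
    ∃ α : E → ℝ, (∀ x, 0 ≤ α x) ∧ ∑ x, α x = 1 ∧
      ∀ y, ∑ x, α x * K x y = (∑ x, α x * ∑ y', K x y') * α y := by
  classical
  have hMpos : ∀ n : ℕ, ∀ x y, 0 < K x y + 1 / ((n : ℝ) + 1) := by
    intro n x y
    have : (0:ℝ) < 1 / ((n : ℝ) + 1) := by positivity
    linarith [hK0 x y]
  choose p hp0 hp1 heig using fun n : ℕ =>
    qsd_pos_eig (fun x y => K x y + 1 / ((n : ℝ) + 1)) (hMpos n)
  obtain ⟨α, hαS, φ, hφ, hconv⟩ := qsd_simplex_compact.tendsto_subseq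
    (x := p) (fun n => ⟨hp0 n, hp1 n⟩)
  obtain ⟨hα0, hα1⟩ := hαS
  refine ⟨α, hα0, hα1, fun y => ?_⟩
  -- entrywise convergence
  have hconv' : ∀ x, Tendsto (fun n => p (φ n) x) atTop (𝓝 (α x)) := fun x =>
    (tendsto_pi_nhds.mp hconv) x
  have hε : Tendsto (fun n => 1 / ((φ n : ℝ) + 1)) atTop (𝓝 0) :=
    tendsto_one_div_add_atTop_nhds_zero_nat.comp hφ.tendsto_atTop
  -- rewrite the eigen equation at level φ n
  have hLHS : ∀ n, ∑ x, p (φ n) x * (K x y + 1 / ((φ n : ℝ) + 1))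
      = (∑ x, p (φ n) x * K x y) + 1 / ((φ n : ℝ) + 1) := by
    intro n
    rw [show ∀ f g : E → ℝ, ∑ x, (f x * (g x + 1 / ((φ n : ℝ) + 1)))
        = ∑ x, (f x * g x + f x * (1 / ((φ n : ℝ) + 1))) from
      fun f g => Finset.sum_congr rfl fun x _ => by ring,
      Finset.sum_add_distrib, ← Finset.sum_mul, hp1 (φ n), one_mul]
  have hRHSin : ∀ n, ∑ x, p (φ n) x * (∑ y', (K x y' + 1 / ((φ n : ℝ) + 1)))
      = (∑ x, p (φ n) x * ∑ y', K x y') + (Fintype.card E : ℝ) * (1 / ((φ n : ℝ) + 1)) := by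
    intro n
    have : ∀ x : E, ∑ y', (K x y' + 1 / ((φ n : ℝ) + 1))
        = ∑ y', K x y' + (Fintype.card E : ℝ) * (1 / ((φ n : ℝ) + 1)) := by
      intro x
      rw [Finset.sum_add_distrib, Finset.sum_const, Finset.card_univ, nsmul_eq_mul]
    calc ∑ x, p (φ n) x * (∑ y', (K x y' + 1 / ((φ n : ℝ) + 1)))
        = ∑ x, (p (φ n) x * ∑ y', K x y'
            + p (φ n) x * ((Fintype.card E : ℝ) * (1 / ((φ n : ℝ) + 1)))) :=
          Finset.sum_congr rfl fun x _ => by rw [this x]; ring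
      _ = _ := by
          rw [Finset.sum_add_distrib, ← Finset.sum_mul, hp1 (φ n), one_mul]
  -- limits
  have h1 : Tendsto (fun n => (∑ x, p (φ n) x * K x y) + 1 / ((φ n : ℝ) + 1)) atTop
      (𝓝 (∑ x, α x * K x y)) := by
    have hsum : Tendsto (fun n => ∑ x, p (φ n) x * K x y) atTop (𝓝 (∑ x, α x * K x y)) :=
      tendsto_finset_sum _ fun x _ => (hconv' x).mul tendsto_const_nhds
    simpa using hsum.add hε
  have h2 : Tendsto (fun n =>
      ((∑ x, p (φ n) x * ∑ y', K x y') + (Fintype.card E : ℝ) * (1 / ((φ n : ℝ) + 1)))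
        * p (φ n) y) atTop (𝓝 ((∑ x, α x * ∑ y', K x y') * α y)) := by
    have hsum : Tendsto (fun n => ∑ x, p (φ n) x * ∑ y', K x y') atTop
        (𝓝 (∑ x, α x * ∑ y', K x y')) :=
      tendsto_finset_sum _ fun x _ => (hconv' x).mul tendsto_const_nhds
    have := (hsum.add (hε.const_mul (Fintype.card E : ℝ))).mul (hconv' y)
    simpa using this
  refine tendsto_nhds_unique (h1.congr fun n => ?_) h2
  rw [← hLHS n, ← hRHSin n]
  exact heig (φ n) y
end

/-- continuity of the stationary-distribution map and existence of a
QSD: let `K` be sub-Markovian on finite `E` such that for every probability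
distribution `α'` on `E` the Markovian kernel `K_{α'}(x,y) = K(x,y)+(1-K(x,E))α'(y)`
is irreducible and aperiodic (primitive) with unique stationary distribution `Γ(α')`.
Then `α' ↦ Γ(α')` is continuous on the probability simplex, and there exists a fixed
point `α = Γ(α)`, which is then a quasi-stationary distribution of `K`. -/
theorem stmt19 {E : Type*} [Fintype E] [DecidableEq E] [Nonempty E]
    (K : E → E → ℝ)
    (hK0 : ∀ x y, 0 ≤ K x y)
    (hK1 : ∀ x, ∑ y, K x y ≤ 1)
    (Γ : (E → ℝ) → (E → ℝ))
    (hprim : ∀ p : E → ℝ, (∀ x, 0 ≤ p x) → ∑ x, p x = 1 →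
      ∃ n, 0 < n ∧ ∀ x y,
        0 < ((Matrix.of fun x y => K x y + (1 - ∑ y', K x y') * p y) ^ n) x y)
    (hΓ : ∀ p : E → ℝ, (∀ x, 0 ≤ p x) → ∑ x, p x = 1 →
      ((∀ x, 0 ≤ Γ p x) ∧ ∑ x, Γ p x = 1) ∧
      (∀ y, ∑ x, Γ p x * (K x y + (1 - ∑ y', K x y') * p y) = Γ p y) ∧
      (∀ q : E → ℝ, (∀ x, 0 ≤ q x) → ∑ x, q x = 1 →
        (∀ y, ∑ x, q x * (K x y + (1 - ∑ y', K x y') * p y) = q y) → q = Γ p)) :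
    ContinuousOn Γ {p : E → ℝ | (∀ x, 0 ≤ p x) ∧ ∑ x, p x = 1} ∧
    ∃ α : E → ℝ, (∀ x, 0 ≤ α x) ∧ ∑ x, α x = 1 ∧ Γ α = α ∧
      ∀ y, α y * (∑ x, α x * ∑ y', K x y') = ∑ x, α x * K x y := by
  classical
  constructor
  · -- continuity of Γ on the simplex
    intro p₀ hp₀
    have hp₀' : (∀ x, 0 ≤ p₀ x) ∧ ∑ x, p₀ x = 1 := hp₀
    rw [ContinuousWithinAt]
    apply tendsto_of_subseq_tendsto
    intro ns hns
    have hnsS : ∀ᶠ n in atTop, (∀ x, 0 ≤ ns n x) ∧ ∑ x, ns n x = 1 :=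
      hns.eventually eventually_mem_nhdsWithin
    have hns' : Tendsto ns atTop (𝓝 p₀) := hns.mono_right nhdsWithin_le_nhds
    have hfreq : ∃ᶠ n in atTop, Γ (ns n) ∈
        {p : E → ℝ | (∀ x, 0 ≤ p x) ∧ ∑ x, p x = 1} :=
      (hnsS.mono fun n hn => (hΓ (ns n) hn.1 hn.2).1).frequently
    obtain ⟨q, hqS, ms, hms, hconv⟩ := qsd_simplex_compact.tendsto_subseq' hfreq
    have hmsS : ∀ᶠ n in atTop, (∀ x, 0 ≤ ns (ms n) x) ∧ ∑ x, ns (ms n) x = 1 :=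
      hms.tendsto_atTop.eventually hnsS
    have hnm : Tendsto (fun n => ns (ms n)) atTop (𝓝 p₀) := hns'.comp hms.tendsto_atTop
    have hΓconv : ∀ x, Tendsto (fun n => Γ (ns (ms n)) x) atTop (𝓝 (q x)) := fun x =>
      tendsto_pi_nhds.mp hconv x
    have hstat : ∀ y, ∑ x, q x * (K x y + (1 - ∑ y', K x y') * p₀ y) = q y := by
      intro y
      have hA : Tendsto (fun n => ∑ x, Γ (ns (ms n)) x *
          (K x y + (1 - ∑ y', K x y') * ns (ms n) y)) atTop
          (𝓝 (∑ x, q x * (K x y + (1 - ∑ y', K x y') * p₀ y))) := by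
        refine tendsto_finset_sum _ fun x _ => (hΓconv x).mul ?_
        exact tendsto_const_nhds.add (tendsto_const_nhds.mul (tendsto_pi_nhds.mp hnm y))
      have heq : (fun n => ∑ x, Γ (ns (ms n)) x *
          (K x y + (1 - ∑ y', K x y') * ns (ms n) y))
          =ᶠ[atTop] fun n => Γ (ns (ms n)) y :=
        hmsS.mono fun n hn => (hΓ (ns (ms n)) hn.1 hn.2).2.1 y
      exact tendsto_nhds_unique (hA.congr' heq) (hΓconv y)
    have hq : q = Γ p₀ := (hΓ p₀ hp₀'.1 hp₀'.2).2.2 q hqS.1 hqS.2 hstat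
    exact ⟨ms, hq ▸ hconv⟩
  · -- existence of a QSD
    obtain ⟨α, hα0, hα1, heig⟩ := qsd_exists_eig K hK0
    have hstat : ∀ y, ∑ x, α x * (K x y + (1 - ∑ y', K x y') * α y) = α y := by
      intro y
      have expand : ∑ x, α x * (K x y + (1 - ∑ y', K x y') * α y)
          = ∑ x, α x * K x y + (1 - ∑ x, α x * ∑ y', K x y') * α y := by
        calc ∑ x, α x * (K x y + (1 - ∑ y', K x y') * α y)
            = ∑ x, (α x * K x y + (α x - α x * ∑ y', K x y') * α y) :=
              Finset.sum_congr rfl fun x _ => by ring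
          _ = ∑ x, α x * K x y + (∑ x, (α x - α x * ∑ y', K x y')) * α y := by
              rw [Finset.sum_add_distrib, ← Finset.sum_mul]
          _ = _ := by rw [Finset.sum_sub_distrib, hα1]
      rw [expand, heig y]; ring
    have hfix : α = Γ α := (hΓ α hα0 hα1).2.2 α hα0 hα1 hstat
    exact ⟨α, hα0, hα1, hfix.symm, fun y => by rw [heig y]; ring⟩
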